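/- First cohomology of a bigraded complex: over a field there are isomorphisms B^1(C,D) ≅ B^1(N_0, D̄) ⊕ B^1(C^{0,•}, D_{0,1}), Z^1(C,D) ≅ Z^1(N_0, D̄) ⊕ ker(ρ_1), and H^1(C,D) ≅ H^1(N_0, D̄) ⊕ ker(ρ_1)/B^1(C^{0,•}, D_{0,1}). -/

import Mathlib

open DirectSum

variable {R M : Type} [CommRing R] [AddCommGroup M] [Module R M]

/-- Projection `π_q` of a bigraded module onto the part of second degree `≥ q`,
along the bigrading. -/
noncomputable def bproj (𝒞 : ℤ × ℤ → Submodule R M) [DirectSum.Decomposition 𝒞] (q : ℤ) :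
    M →ₗ[R] M :=
  (DirectSum.coeLinearMap 𝒞).comp <|
    (DFinsupp.filterLinearMap R (fun pq : ℤ × ℤ => 𝒞 pq) (fun pq => q ≤ pq.2)).comp
      (DirectSum.decomposeLinearEquiv 𝒞).toLinearMap

/-- The bihomogeneous component of bidegree `(p, q)` of an element. -/
noncomputable def bcomp (𝒞 : ℤ × ℤ → Submodule R M) [DirectSum.Decomposition 𝒞] (p q : ℤ)
    (x : M) : M :=
  (DirectSum.decompose 𝒞 x (p, q) : M)

/-- The total-degree-`k` part `C^k = ⊕_{p+q=k} C^{p,q}`. -/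
def bdeg (𝒞 : ℤ × ℤ → Submodule R M) (k : ℤ) : Submodule R M :=
  ⨆ p : ℤ, 𝒞 (p, k - p)

/-- The part of second degree `q`, `⊕_p C^{p,q}`. -/
def brow (𝒞 : ℤ × ℤ → Submodule R M) (q : ℤ) : Submodule R M :=
  ⨆ p : ℤ, 𝒞 (p, q)

/-- The decreasing column filtration `F^p C = ⊕_{i ≥ p, j} C^{i,j}`. -/
def bfil (𝒞 : ℤ × ℤ → Submodule R M) (p : ℤ) : Submodule R M :=
  ⨆ (i : ℤ) (_ : p ≤ i) (j : ℤ), 𝒞 (i, j)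

section gen
variable {K V W : Type} [DivisionRing K] [AddCommGroup V] [Module K V]
  [AddCommGroup W] [Module K W]

lemma gen1 (g : V →ₗ[K] W) :
    Nonempty (V ≃ₗ[K] ↥(LinearMap.ker g) × ↥(LinearMap.range g)) := by
  obtain ⟨q, hq⟩ := Submodule.exists_isCompl (LinearMap.ker g)
  exact ⟨(Submodule.prodEquivOfIsCompl _ _ hq).symm.trans
    ((LinearEquiv.refl K _).prodCongr
      ((Submodule.quotientEquivOfIsCompl _ _ hq).symm.trans g.quotKerEquivRange))⟩

lemma gen2 (g : V →ₗ[K] W) (U : Submodule K V) :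
    Nonempty ((V ⧸ U) ≃ₗ[K]
      (↥(LinearMap.ker g) ⧸ Submodule.comap (LinearMap.ker g).subtype U) ×
      (↥(LinearMap.range g) ⧸ Submodule.comap (LinearMap.range g).subtype (U.map g))) := by
  set A := LinearMap.ker g
  set Rg := LinearMap.range g
  set B : Submodule K ↥Rg := Submodule.comap Rg.subtype (U.map g) with hB
  set h : V →ₗ[K] ↥Rg ⧸ B := B.mkQ.comp g.rangeRestrict with hh
  have hval : ∀ x : V, (h x = 0) ↔ g x ∈ U.map g := by
    intro x
    simp only [hh, LinearMap.comp_apply, Submodule.mkQ_apply, Submodule.Quotient.mk_eq_zero,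
      hB, Submodule.mem_comap]
    rfl
  have hU : U ≤ LinearMap.ker h := by
    intro u hu
    rw [LinearMap.mem_ker, hval]
    exact Submodule.mem_map_of_mem hu
  set Φ : (V ⧸ U) →ₗ[K] (↥Rg ⧸ B) := U.liftQ h hU with hΦ
  have hΦmk : ∀ x : V, Φ (Submodule.Quotient.mk x) = h x := fun x => rfl
  have hΦsurj : Function.Surjective Φ := by
    intro y
    obtain ⟨y', rfl⟩ := B.mkQ_surjective y
    obtain ⟨x, rfl⟩ := g.surjective_rangeRestrict y'
    exact ⟨Submodule.Quotient.mk x, rfl⟩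
  set θ : ↥A →ₗ[K] V ⧸ U := U.mkQ.comp A.subtype with hθ
  have hθker : LinearMap.ker θ = Submodule.comap A.subtype U := by
    ext x; simp [hθ, Submodule.Quotient.mk_eq_zero]
  have hθrange : LinearMap.range θ = LinearMap.ker Φ := by
    apply le_antisymm
    · rintro _ ⟨x, rfl⟩
      have : θ x = Submodule.Quotient.mk (x : V) := rfl
      rw [LinearMap.mem_ker, this, hΦmk, hval]
      exact ⟨0, Submodule.zero_mem U, by simp [x.2]⟩
    · intro y hy
      obtain ⟨x, rfl⟩ := U.mkQ_surjective y
      rw [LinearMap.mem_ker, Submodule.mkQ_apply, hΦmk, hval] at hy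
      obtain ⟨u, hu, hgu⟩ := hy
      have hxu : x - u ∈ A := by
        have : g (x - u) = 0 := by rw [map_sub, hgu, sub_self]
        exact this
      refine ⟨⟨x - u, hxu⟩, ?_⟩
      have : θ ⟨x - u, hxu⟩ = Submodule.Quotient.mk (x - u) := rfl
      rw [this, Submodule.mkQ_apply, Submodule.Quotient.eq]
      simpa using U.neg_mem hu
  obtain ⟨e⟩ := gen1 Φ
  have e1 : (↥(LinearMap.ker Φ)) ≃ₗ[K] (↥A ⧸ Submodule.comap A.subtype U) := by
    rw [← hθrange, ← hθker]
    exact θ.quotKerEquivRange.symm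
  have e2 : (↥(LinearMap.range Φ)) ≃ₗ[K] (↥Rg ⧸ B) :=
    LinearEquiv.ofTop _ (LinearMap.range_eq_top.2 hΦsurj)
  exact ⟨e.trans (e1.prodCongr e2)⟩

end gen

section pr
variable {K N : Type} [Semiring K] [AddCommMonoid N] [Module K N]

noncomputable def prj (𝒞 : ℤ × ℤ → Submodule K N) [DirectSum.Decomposition 𝒞]
    (pq : ℤ × ℤ) : N →ₗ[K] N :=
  (𝒞 pq).subtype ∘ₗ (DirectSum.component K (ℤ × ℤ) (fun i => ↥(𝒞 i)) pq) ∘ₗ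
    (DirectSum.decomposeLinearEquiv 𝒞).toLinearMap

lemma prj_apply (𝒞 : ℤ × ℤ → Submodule K N) [DirectSum.Decomposition 𝒞] (pq : ℤ × ℤ)
    (x : N) : prj 𝒞 pq x = (DirectSum.decompose 𝒞 x pq : N) := rfl

lemma prj_same (𝒞 : ℤ × ℤ → Submodule K N) [DirectSum.Decomposition 𝒞] {pq : ℤ × ℤ}
    {x : N} (hx : x ∈ 𝒞 pq) : prj 𝒞 pq x = x := by
  rw [prj_apply]; exact DirectSum.decompose_of_mem_same 𝒞 hx

lemma prj_ne (𝒞 : ℤ × ℤ → Submodule K N) [DirectSum.Decomposition 𝒞] {pq pq' : ℤ × ℤ}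
    {x : N} (hx : x ∈ 𝒞 pq') (h : pq' ≠ pq) : prj 𝒞 pq x = 0 := by
  rw [prj_apply]; exact DirectSum.decompose_of_mem_ne 𝒞 hx h

lemma three_zero (𝒞 : ℤ × ℤ → Submodule K N) [DirectSum.Decomposition 𝒞]
    {i j l : ℤ × ℤ} {a b c : N} (ha : a ∈ 𝒞 i) (hb : b ∈ 𝒞 j) (hc : c ∈ 𝒞 l)
    (hij : i ≠ j) (hil : i ≠ l) (hjl : j ≠ l) (h : a + b + c = 0) :
    a = 0 ∧ b = 0 ∧ c = 0 := by
  have key : ∀ pq : ℤ × ℤ, prj 𝒞 pq (a + b + c) = 0 := by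
    intro pq; rw [h, map_zero]
  refine ⟨?_, ?_, ?_⟩
  · have := key i
    rwa [map_add, map_add, prj_same 𝒞 ha, prj_ne 𝒞 hb hij.symm, prj_ne 𝒞 hc hil.symm,
      add_zero, add_zero] at this
  · have := key j
    rwa [map_add, map_add, prj_ne 𝒞 ha hij, prj_same 𝒞 hb, prj_ne 𝒞 hc hjl.symm,
      zero_add, add_zero] at this
  · have := key l
    rwa [map_add, map_add, prj_ne 𝒞 ha hil, prj_ne 𝒞 hb hjl, prj_same 𝒞 hc,
      zero_add, zero_add] at this

end pr

theorem statement13 {K M : Type} [Field K] [AddCommGroup M] [Module K M]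
    (𝒞 : ℤ × ℤ → Submodule K M) [DirectSum.Decomposition 𝒞]
    (hfq : ∀ p q : ℤ, p < 0 ∨ q < 0 → 𝒞 (p, q) = ⊥)
    (D21 D10 D01 : M →ₗ[K] M)
    (h21 : ∀ p q : ℤ, (𝒞 (p, q)).map D21 ≤ 𝒞 (p + 2, q - 1))
    (h10 : ∀ p q : ℤ, (𝒞 (p, q)).map D10 ≤ 𝒞 (p + 1, q))
    (h01 : ∀ p q : ℤ, (𝒞 (p, q)).map D01 ≤ 𝒞 (p, q + 1))
    (D : M →ₗ[K] M) (hDdef : D = D21 + D10 + D01) (hD : D ∘ₗ D = 0)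
    -- `B¹(N₀, D̄)`, `B¹(C^{0,•}, D_{0,1})`, `B¹(C,D)`, `Z¹(N₀, D̄)`, `Z¹(C,D)`
    (BN1 : Submodule K M) (hBN1 : BN1 = Submodule.map D10 (𝒞 (0, 0) ⊓ LinearMap.ker D01))
    (Bcol : Submodule K M) (hBcol : Bcol = Submodule.map D01 (𝒞 (0, 0)))
    (B1 : Submodule K M) (hB1 : B1 = Submodule.map D (bdeg 𝒞 0))
    (ZN1 : Submodule K M) (hZN1 : ZN1 = 𝒞 (1, 0) ⊓ LinearMap.ker D10 ⊓ LinearMap.ker D01)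
    (Z1 : Submodule K M) (hZ1 : Z1 = bdeg 𝒞 1 ⊓ LinearMap.ker D)
    -- `ker ρ₁`, described explicitly
    (Kρ : Submodule K M)
    (hKρ : (Kρ : Set M) = {Y : M | Y ∈ 𝒞 (0, 1) ∧ D01 Y = 0 ∧
      ∃ α ∈ 𝒞 (1, 0), D01 α + D10 Y = 0 ∧
        D21 Y + D10 α ∈ Submodule.map D10 (𝒞 (1, 0) ⊓ LinearMap.ker D01)}) :
    Nonempty (↥B1 ≃ₗ[K] ↥BN1 × ↥Bcol) ∧
    Nonempty (↥Z1 ≃ₗ[K] ↥ZN1 × ↥Kρ) ∧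
    Nonempty ((↥Z1 ⧸ Submodule.comap Z1.subtype B1) ≃ₗ[K]
      (↥ZN1 ⧸ Submodule.comap ZN1.subtype BN1) ×
      (↥Kρ ⧸ Submodule.comap Kρ.subtype Bcol)) := by
  classical
  -- normalized membership facts
  have c00_10 : ∀ {x : M}, x ∈ 𝒞 (0, 0) → D10 x ∈ 𝒞 (1, 0) := fun {x} hx => by
    simpa using h10 0 0 (Submodule.mem_map_of_mem hx)
  have c00_01 : ∀ {x : M}, x ∈ 𝒞 (0, 0) → D01 x ∈ 𝒞 (0, 1) := fun {x} hx => by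
    simpa using h01 0 0 (Submodule.mem_map_of_mem hx)
  have c00_21 : ∀ {x : M}, x ∈ 𝒞 (0, 0) → D21 x = 0 := fun {x} hx => by
    have h1 : D21 x ∈ 𝒞 (2, -1) := by simpa using h21 0 0 (Submodule.mem_map_of_mem hx)
    rw [hfq 2 (-1) (Or.inr (by norm_num))] at h1
    simpa using h1
  have c01_21 : ∀ {x : M}, x ∈ 𝒞 (0, 1) → D21 x ∈ 𝒞 (2, 0) := fun {x} hx => by
    simpa using h21 0 1 (Submodule.mem_map_of_mem hx)
  have c01_10 : ∀ {x : M}, x ∈ 𝒞 (0, 1) → D10 x ∈ 𝒞 (1, 1) := fun {x} hx => by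
    simpa using h10 0 1 (Submodule.mem_map_of_mem hx)
  have c01_01 : ∀ {x : M}, x ∈ 𝒞 (0, 1) → D01 x ∈ 𝒞 (0, 2) := fun {x} hx => by
    simpa using h01 0 1 (Submodule.mem_map_of_mem hx)
  have c10_21 : ∀ {x : M}, x ∈ 𝒞 (1, 0) → D21 x = 0 := fun {x} hx => by
    have h1 : D21 x ∈ 𝒞 (3, -1) := by simpa using h21 1 0 (Submodule.mem_map_of_mem hx)
    rw [hfq 3 (-1) (Or.inr (by norm_num))] at h1
    simpa using h1
  have c10_10 : ∀ {x : M}, x ∈ 𝒞 (1, 0) → D10 x ∈ 𝒞 (2, 0) := fun {x} hx => by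
    simpa using h10 1 0 (Submodule.mem_map_of_mem hx)
  have c10_01 : ∀ {x : M}, x ∈ 𝒞 (1, 0) → D01 x ∈ 𝒞 (1, 1) := fun {x} hx => by
    simpa using h01 1 0 (Submodule.mem_map_of_mem hx)
  have hDapp : ∀ x : M, D x = D21 x + D10 x + D01 x := fun x => by
    rw [hDdef]; simp [LinearMap.add_apply]
  have hDf : ∀ {f : M}, f ∈ 𝒞 (0, 0) → D f = D10 f + D01 f := fun {f} hf => by
    rw [hDapp, c00_21 hf, zero_add]
  have hDD : ∀ x : M, D (D x) = 0 := fun x => by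
    have := LinearMap.ext_iff.mp hD x
    simpa [LinearMap.comp_apply] using this
  have rels : ∀ {f : M}, f ∈ 𝒞 (0, 0) →
      (D10 (D10 f) + D21 (D01 f) = 0) ∧ (D01 (D10 f) + D10 (D01 f) = 0) ∧
        D01 (D01 f) = 0 := by
    intro f hf
    have e1 : D (D f) = 0 := hDD f
    rw [hDf hf, map_add, hDapp (D10 f), hDapp (D01 f), c10_21 (c00_10 hf)] at e1
    have h0 : (D10 (D10 f) + D21 (D01 f)) + (D01 (D10 f) + D10 (D01 f)) +
        D01 (D01 f) = 0 := by rw [← e1]; abel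
    exact three_zero 𝒞 (add_mem (c10_10 (c00_10 hf)) (c01_21 (c00_01 hf)))
      (add_mem (c10_01 (c00_10 hf)) (c01_10 (c00_01 hf))) (c01_01 (c00_01 hf))
      (by decide) (by decide) (by decide) h0
  have hDYα : ∀ {Y : M}, Y ∈ 𝒞 (0, 1) → ∀ {α : M}, α ∈ 𝒞 (1, 0) →
      (D (Y + α) = 0 ↔ (D21 Y + D10 α = 0 ∧ D10 Y + D01 α = 0 ∧ D01 Y = 0)) := by
    intro Y hY α hα
    have expand : D (Y + α) = (D21 Y + D10 α) + (D10 Y + D01 α) + D01 Y := by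
      rw [map_add, hDapp Y, hDapp α, c10_21 hα]; abel
    constructor
    · intro h0
      exact three_zero 𝒞 (add_mem (c01_21 hY) (c10_10 hα))
        (add_mem (c01_10 hY) (c10_01 hα)) (c01_01 hY)
        (by decide) (by decide) (by decide) (by rw [← expand, h0])
    · rintro ⟨h1, h2, h3⟩
      rw [expand, h1, h2, h3]; simp
  have hbdeg0 : bdeg 𝒞 0 = 𝒞 (0, 0) := by
    apply le_antisymm
    · apply iSup_le
      intro p
      rcases (by omega : p = 0 ∨ p < 0 ∨ (0 : ℤ) - p < 0) with hp | hp | hp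
      · subst hp; norm_num
      · rw [hfq p (0 - p) (Or.inl hp)]; exact bot_le
      · rw [hfq p (0 - p) (Or.inr hp)]; exact bot_le
    · have := le_iSup (fun p : ℤ => 𝒞 (p, 0 - p)) 0
      simpa [bdeg] using this
  have hbdeg1 : bdeg 𝒞 1 = 𝒞 (0, 1) ⊔ 𝒞 (1, 0) := by
    apply le_antisymm
    · apply iSup_le
      intro p
      rcases (by omega : p = 0 ∨ p = 1 ∨ p < 0 ∨ (1 : ℤ) - p < 0) with hp | hp | hp | hp
      · subst hp; norm_num
      · subst hp; norm_num
      · rw [hfq p (1 - p) (Or.inl hp)]; exact bot_le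
      · rw [hfq p (1 - p) (Or.inr hp)]; exact bot_le
    · apply sup_le
      · have := le_iSup (fun p : ℤ => 𝒞 (p, 1 - p)) 0
        simpa [bdeg] using this
      · have := le_iSup (fun p : ℤ => 𝒞 (p, 1 - p)) 1
        simpa [bdeg] using this
  -- the projection onto bidegree (0,1)
  set π : M →ₗ[K] M := prj 𝒞 (0, 1) with hπdef
  have π01 : ∀ {x : M}, x ∈ 𝒞 (0, 1) → π x = x := fun {x} hx => prj_same 𝒞 hx
  have π10 : ∀ {x : M}, x ∈ 𝒞 (1, 0) → π x = 0 := fun {x} hx => prj_ne 𝒞 hx (by decide)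
  have πDf : ∀ {f : M}, f ∈ 𝒞 (0, 0) → π (D f) = D01 f := fun {f} hf => by
    rw [hDf hf, map_add, π10 (c00_10 hf), π01 (c00_01 hf), zero_add]
  have memB1 : ∀ x : M, x ∈ B1 ↔ ∃ f ∈ 𝒞 (0, 0), D f = x := by
    intro x; rw [hB1, hbdeg0]; exact Submodule.mem_map
  have hBN1_le_B1 : BN1 ≤ B1 := by
    rw [hBN1]
    rintro x ⟨f, ⟨hf00, hf01⟩, rfl⟩
    exact (memB1 _).2 ⟨f, hf00, by rw [hDf hf00, LinearMap.mem_ker.1 hf01, add_zero]⟩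
  have hB1pi : ∀ x ∈ B1, π x = 0 → x ∈ BN1 := by
    intro x hx hpx
    obtain ⟨f, hf, rfl⟩ := (memB1 x).1 hx
    rw [πDf hf] at hpx
    rw [hBN1]
    exact ⟨f, ⟨hf, LinearMap.mem_ker.2 hpx⟩, by rw [hDf hf, hpx, add_zero]⟩
  -- Part 1
  set g₁ : ↥B1 →ₗ[K] M := π.comp B1.subtype with hg₁
  have hg₁app : ∀ x : ↥B1, g₁ x = π (x : M) := fun x => rfl
  have hker₁ : LinearMap.ker g₁ = Submodule.comap B1.subtype BN1 := by
    ext x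
    rw [LinearMap.mem_ker, Submodule.mem_comap, Submodule.subtype_apply, hg₁app]
    constructor
    · intro h; exact hB1pi x x.2 h
    · intro h
      rw [hBN1] at h
      obtain ⟨f, ⟨hf, hf01⟩, hfx⟩ := h
      rw [← hfx]; exact π10 (c00_10 hf)
  have hrange₁ : LinearMap.range g₁ = Bcol := by
    apply le_antisymm
    · rintro _ ⟨x, rfl⟩
      obtain ⟨f, hf, hfx⟩ := (memB1 x).1 x.2
      rw [hg₁app, ← hfx, πDf hf, hBcol]
      exact Submodule.mem_map_of_mem hf
    · rw [hBcol]
      rintro _ ⟨f, hf, rfl⟩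
      refine ⟨⟨D f, (memB1 _).2 ⟨f, hf, rfl⟩⟩, ?_⟩
      rw [hg₁app]; exact πDf hf
  obtain ⟨e1⟩ := gen1 g₁
  have ek1 : ↥(LinearMap.ker g₁) ≃ₗ[K] ↥BN1 := by
    rw [hker₁]; exact Submodule.comapSubtypeEquivOfLe hBN1_le_B1
  have er1 : ↥(LinearMap.range g₁) ≃ₗ[K] ↥Bcol := by
    rw [hrange₁]
  refine ⟨⟨e1.trans (ek1.prodCongr er1)⟩, ?_, ?_⟩
  -- Part 2 setup
  all_goals {
    have memZ1 : ∀ x : M, x ∈ Z1 ↔ ∃ Y ∈ 𝒞 (0, 1), ∃ α ∈ 𝒞 (1, 0), x = Y + α ∧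
        D01 Y = 0 ∧ D10 Y + D01 α = 0 ∧ D21 Y + D10 α = 0 := by
      intro x
      rw [hZ1, Submodule.mem_inf, hbdeg1, LinearMap.mem_ker]
      constructor
      · rintro ⟨hsup, hdx⟩
        obtain ⟨Y, hY, α, hα, hx⟩ := Submodule.mem_sup.1 hsup
        have h0 : D (Y + α) = 0 := by rw [hx]; exact hdx
        have := (hDYα hY hα).1 h0
        exact ⟨Y, hY, α, hα, hx.symm, this.2.2, this.2.1, this.1⟩
      · rintro ⟨Y, hY, α, hα, rfl, h3, h2, h1⟩
        exact ⟨Submodule.mem_sup.2 ⟨Y, hY, α, hα, rfl⟩, (hDYα hY hα).2 ⟨h1, h2, h3⟩⟩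
    have hZN1_le_Z1 : ZN1 ≤ Z1 := by
      rw [hZN1]
      rintro x ⟨⟨hx10, hxk10⟩, hxk01⟩
      rw [memZ1]
      exact ⟨0, Submodule.zero_mem _, x, hx10, (zero_add x).symm, by simp,
        by simpa using LinearMap.mem_ker.1 hxk01,
        by simpa using LinearMap.mem_ker.1 hxk10⟩
    set g₂ : ↥Z1 →ₗ[K] M := π.comp Z1.subtype with hg₂
    have hg₂app : ∀ x : ↥Z1, g₂ x = π (x : M) := fun x => rfl
    have hker₂ : LinearMap.ker g₂ = Submodule.comap Z1.subtype ZN1 := by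
      ext x
      rw [LinearMap.mem_ker, Submodule.mem_comap, Submodule.subtype_apply, hg₂app]
      constructor
      · intro h
        obtain ⟨Y, hY, α, hα, hx, h3, h2, h1⟩ := (memZ1 x).1 x.2
        have hπx : π (x : M) = Y := by rw [hx, map_add, π01 hY, π10 hα, add_zero]
        have hY0 : Y = 0 := by rw [← hπx]; exact h
        have hxα : (x : M) = α := by rw [hx, hY0, zero_add]
        rw [hY0] at h1 h2
        rw [hZN1]
        refine ⟨⟨hxα ▸ hα, ?_⟩, ?_⟩
        · exact LinearMap.mem_ker.2 (by rw [hxα]; simpa using h1)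
        · exact LinearMap.mem_ker.2 (by rw [hxα]; simpa using h2)
      · intro h
        rw [hZN1] at h
        exact π10 h.1.1
    have memKρ : ∀ Y : M, Y ∈ Kρ ↔ (Y ∈ 𝒞 (0, 1) ∧ D01 Y = 0 ∧
        ∃ α ∈ 𝒞 (1, 0), D01 α + D10 Y = 0 ∧
          D21 Y + D10 α ∈ Submodule.map D10 (𝒞 (1, 0) ⊓ LinearMap.ker D01)) := by
      intro Y
      rw [← SetLike.mem_coe, hKρ]
      exact Iff.rfl
    have hrange₂ : LinearMap.range g₂ = Kρ := by
      apply le_antisymm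
      · rintro _ ⟨x, rfl⟩
        obtain ⟨Y, hY, α, hα, hx, h3, h2, h1⟩ := (memZ1 x).1 x.2
        have hπx : g₂ x = Y := by rw [hg₂app, hx, map_add, π01 hY, π10 hα, add_zero]
        rw [hπx, memKρ]
        exact ⟨hY, h3, α, hα, by rw [add_comm]; exact h2,
          by rw [h1]; exact Submodule.zero_mem _⟩
      · intro Y hY
        obtain ⟨hY01, h3, α, hα, h2, hmem⟩ := (memKρ Y).1 hY
        obtain ⟨β, ⟨hβ10, hβ01⟩, hβ⟩ := hmem
        have hβ01' : D01 β = 0 := LinearMap.mem_ker.1 hβ01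
        have hxZ : Y + (α - β) ∈ Z1 := by
          rw [memZ1]
          refine ⟨Y, hY01, α - β, sub_mem hα hβ10, rfl, h3, ?_, ?_⟩
          · rw [map_sub, hβ01', sub_zero, add_comm]; exact h2
          · rw [map_sub, hβ]; abel
        refine ⟨⟨Y + (α - β), hxZ⟩, ?_⟩
        rw [hg₂app]
        show π (Y + (α - β)) = Y
        rw [map_add, π01 hY01, π10 (sub_mem hα hβ10), add_zero]
    first
    | · -- Part 2 conclusion
        obtain ⟨e2⟩ := gen1 g₂
        have ek2 : ↥(LinearMap.ker g₂) ≃ₗ[K] ↥ZN1 := by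
          rw [hker₂]; exact Submodule.comapSubtypeEquivOfLe hZN1_le_Z1
        have er2 : ↥(LinearMap.range g₂) ≃ₗ[K] ↥Kρ := by rw [hrange₂]
        exact ⟨e2.trans (ek2.prodCongr er2)⟩
    | · -- Part 3
        have hB1_le_Z1 : B1 ≤ Z1 := by
          intro x hx
          obtain ⟨f, hf, rfl⟩ := (memB1 x).1 hx
          rw [memZ1]
          refine ⟨D01 f, c00_01 hf, D10 f, c00_10 hf, by rw [hDf hf, add_comm],
            (rels hf).2.2, ?_, ?_⟩
          · rw [add_comm]; exact (rels hf).2.1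
          · rw [add_comm]; exact (rels hf).1
        have hZB : ∀ y : M, y ∈ ZN1 → y ∈ B1 → y ∈ BN1 := by
          intro y hyZ hyB
          apply hB1pi y hyB
          rw [hZN1] at hyZ
          exact π10 hyZ.1.1
        obtain ⟨e3⟩ := gen2 g₂ (Submodule.comap Z1.subtype B1)
        have hmapU : (Submodule.comap Z1.subtype B1).map g₂ = Bcol := by
          apply le_antisymm
          · rintro _ ⟨x, hxU, rfl⟩
            obtain ⟨f, hf, hfx⟩ := (memB1 _).1 (show (x : M) ∈ B1 from hxU)
            rw [hg₂app, ← hfx, πDf hf, hBcol]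
            exact Submodule.mem_map_of_mem hf
          · rw [hBcol]
            rintro _ ⟨f, hf, rfl⟩
            have hmB : D f ∈ B1 := (memB1 _).2 ⟨f, hf, rfl⟩
            refine ⟨⟨D f, hB1_le_Z1 hmB⟩, hmB, ?_⟩
            rw [hg₂app]; exact πDf hf
        have ea : (↥(LinearMap.ker g₂) ⧸
              Submodule.comap (LinearMap.ker g₂).subtype (Submodule.comap Z1.subtype B1))
            ≃ₗ[K] (↥ZN1 ⧸ Submodule.comap ZN1.subtype BN1) := by
          rw [hker₂]
          refine Submodule.Quotient.equiv _ _
            (Submodule.comapSubtypeEquivOfLe hZN1_le_Z1) ?_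
          ext y
          rw [Submodule.mem_map]
          constructor
          · rintro ⟨z, hz, rfl⟩
            rw [Submodule.mem_comap, Submodule.mem_comap, Submodule.subtype_apply,
              Submodule.subtype_apply] at hz
            rw [Submodule.mem_comap, Submodule.subtype_apply]
            show ((Submodule.comapSubtypeEquivOfLe hZN1_le_Z1) z : M) ∈ BN1
            rw [Submodule.comapSubtypeEquivOfLe_apply_coe]
            exact hZB _ z.2 hz
          · intro hy
            rw [Submodule.mem_comap, Submodule.subtype_apply] at hy
            refine ⟨⟨⟨(y : M), hZN1_le_Z1 y.2⟩, y.2⟩, ?_, ?_⟩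
            · rw [Submodule.mem_comap, Submodule.mem_comap, Submodule.subtype_apply,
                Submodule.subtype_apply]
              exact hBN1_le_B1 hy
            · apply Subtype.ext
              rfl
        rw [hrange₂, hmapU] at e3
        exact ⟨e3.trans (ea.prodCongr (LinearEquiv.refl K _))⟩
  }
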